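/- Let X be a compactum (a compact perfect metric space with more than one point), let n ≥ 2 be an integer, and let f : X → X be a continuous map. Then the following statements are equivalent: (1) f is weakly mixing; (2) F_n(f) is weakly mixing; (3) SF_n(f) is weakly mixing; (4) F_n(f) is totally transitive; (5) SF_n(f) is totally transitive; (6) F_n(f) is transitive; (7) SF_n(f) is transitive. -/

import Mathlib

open Metric Set TopologicalSpace

variable (X : Type*) [MetricSpace X] (n : ℕ)

/-- The `n`-fold symmetric product `F_n(X)`: nonempty subsets of `X` with at most `n`
points, as a subspace of the nonempty compact subsets of `X` with the Hausdorff metric. -/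
abbrev Fn := {A : NonemptyCompacts X // (A : Set X).Finite ∧ (A : Set X).ncard ≤ n}

/-- The induced map `F_n(f)` on the `n`-fold symmetric product, `A ↦ f(A)`. -/
noncomputable def FnMap (f : X → X) : Fn X n → Fn X n := fun A =>
  ⟨⟨⟨f '' (A.1 : Set X), (A.2.1.image f).isCompact⟩, A.1.nonempty.image f⟩,
    A.2.1.image f, le_trans (Set.ncard_image_le A.2.1) A.2.2⟩

/-- `F_1(X) ⊆ F_n(X)`: the set of singletons. -/
def F1 : Set (Fn X n) := {A | ∃ x : X, (A.1 : Set X) = {x}}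

/-- The setoid collapsing `F_1(X)` to a point. -/
def SFnSetoid : Setoid (Fn X n) where
  r A B := A = B ∨ (A ∈ F1 X n ∧ B ∈ F1 X n)
  iseqv := by
    refine ⟨fun _ => Or.inl rfl, fun h => h.imp Eq.symm And.symm, fun h₁ h₂ => ?_⟩
    rcases h₁ with rfl | h₁
    · exact h₂
    · rcases h₂ with rfl | h₂
      · exact Or.inr h₁
      · exact Or.inr ⟨h₁.1, h₂.2⟩

/-- The `n`-fold symmetric product suspension `SF_n(X) = F_n(X)/F_1(X)`,
with the quotient topology. -/
abbrev SFn := Quotient (SFnSetoid X n)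

/-- The quotient map `q : F_n(X) → SF_n(X)`. -/
def SFnQ : Fn X n → SFn X n := Quotient.mk (SFnSetoid X n)

/-- The induced map `SF_n(f)` on the suspension, with `SF_n(f) ∘ q = q ∘ F_n(f)`. -/
noncomputable def SFnMap (f : X → X) : SFn X n → SFn X n :=
  Quotient.lift (fun A => SFnQ X n (FnMap X n f A))
    (fun A B h => Quotient.sound (by
      rcases h with rfl | ⟨⟨x, hx⟩, ⟨y, hy⟩⟩
      · exact Or.inl rfl
      · exact Or.inr ⟨⟨f x, by simp [FnMap, hx]⟩, ⟨f y, by simp [FnMap, hy]⟩⟩))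

/-- The metric `ρ` on `SF_n(X)`:
`ρ(χ₁,χ₂) = H(F_1(X) ∪ q⁻¹(χ₁), F_1(X) ∪ q⁻¹(χ₂))` where `H` is the Hausdorff
distance between subsets of `F_n(X)`. -/
noncomputable def SFnDist : SFn X n → SFn X n → ℝ := fun a b =>
  Metric.hausdorffDist (F1 X n ∪ SFnQ X n ⁻¹' {a}) (F1 X n ∪ SFnQ X n ⁻¹' {b})

/-- `g` is (topologically) transitive. -/
def TransitiveMap {Z : Type*} [TopologicalSpace Z] (g : Z → Z) : Prop :=
  ∀ U V : Set Z, IsOpen U → IsOpen V → U.Nonempty → V.Nonempty →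
    ∃ k : ℕ, 0 < k ∧ (g^[k] '' U ∩ V).Nonempty

/-- `g` is totally transitive: `g^k` is transitive for every `k ≥ 1`. -/
def TotallyTransitive {Z : Type*} [TopologicalSpace Z] (g : Z → Z) : Prop :=
  ∀ k : ℕ, 0 < k → TransitiveMap (g^[k])

/-- `g` is weakly mixing. -/
def WeaklyMixing {Z : Type*} [TopologicalSpace Z] (g : Z → Z) : Prop :=
  ∀ U₁ U₂ V₁ V₂ : Set Z, IsOpen U₁ → IsOpen U₂ → IsOpen V₁ → IsOpen V₂ →
    U₁.Nonempty → U₂.Nonempty → V₁.Nonempty → V₂.Nonempty →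
    ∃ k : ℕ, 0 < k ∧ (g^[k] '' U₁ ∩ V₁).Nonempty ∧ (g^[k] '' U₂ ∩ V₂).Nonempty

section General
variable {Z : Type*} [TopologicalSpace Z] {g : Z → Z}

lemma wm_transitive (hwm : WeaklyMixing g) : TransitiveMap g := by
  intro U V hU hV hUn hVn
  obtain ⟨k, hk, h1, _⟩ := hwm U U V V hU hU hV hV hUn hUn hVn hVn
  exact ⟨k, hk, h1⟩

/-- Furstenberg's intersection lemma. -/
lemma furstenberg (hg : Continuous g) (hwm : WeaklyMixing g)
    {A B C D : Set Z} (hA : IsOpen A) (hB : IsOpen B) (hC : IsOpen C) (hD : IsOpen D)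
    (hAn : A.Nonempty) (hBn : B.Nonempty) (hCn : C.Nonempty) (hDn : D.Nonempty) :
    ∃ E F : Set Z, IsOpen E ∧ IsOpen F ∧ E.Nonempty ∧ F.Nonempty ∧
      ∀ k : ℕ, (g^[k] '' E ∩ F).Nonempty →
        (g^[k] '' A ∩ B).Nonempty ∧ (g^[k] '' C ∩ D).Nonempty := by
  obtain ⟨m, _, h1, h2⟩ := hwm A B C D hA hB hC hD hAn hBn hCn hDn
  refine ⟨A ∩ g^[m] ⁻¹' C, B ∩ g^[m] ⁻¹' D,
    hA.inter (hC.preimage (hg.iterate m)), hB.inter (hD.preimage (hg.iterate m)),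
    ?_, ?_, ?_⟩
  · obtain ⟨y, ⟨a, ha, rfl⟩, hyC⟩ := h1
    exact ⟨a, ha, hyC⟩
  · obtain ⟨y, ⟨b, hb, rfl⟩, hyD⟩ := h2
    exact ⟨b, hb, hyD⟩
  · rintro k ⟨y, ⟨e, ⟨heA, heC⟩, rfl⟩, hyB, hyD⟩
    constructor
    · exact ⟨g^[k] e, ⟨e, heA, rfl⟩, hyB⟩
    · refine ⟨g^[m] (g^[k] e), ⟨g^[m] e, heC, ?_⟩, hyD⟩
      rw [← Function.iterate_add_apply, ← Function.iterate_add_apply, Nat.add_comm]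

/-- Multi-pair weak mixing: a common time for any finite list of pairs of open sets. -/
lemma multiWM (hg : Continuous g) (hwm : WeaklyMixing g) :
    ∀ l : List (Set Z × Set Z),
      (∀ p ∈ l, IsOpen p.1 ∧ p.1.Nonempty ∧ IsOpen p.2 ∧ p.2.Nonempty) →
      ∃ k : ℕ, 0 < k ∧ ∀ p ∈ l, (g^[k] '' p.1 ∩ p.2).Nonempty := by
  -- First, the "compression" statement by induction
  have key : ∀ (l : List (Set Z × Set Z)) (p : Set Z × Set Z),
      (IsOpen p.1 ∧ p.1.Nonempty ∧ IsOpen p.2 ∧ p.2.Nonempty) →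
      (∀ q ∈ l, IsOpen q.1 ∧ q.1.Nonempty ∧ IsOpen q.2 ∧ q.2.Nonempty) →
      ∃ E F : Set Z, IsOpen E ∧ IsOpen F ∧ E.Nonempty ∧ F.Nonempty ∧
        ∀ k : ℕ, (g^[k] '' E ∩ F).Nonempty →
          (g^[k] '' p.1 ∩ p.2).Nonempty ∧ ∀ q ∈ l, (g^[k] '' q.1 ∩ q.2).Nonempty := by
    intro l
    induction l with
    | nil =>
      intro p hp _
      exact ⟨p.1, p.2, hp.1, hp.2.2.1, hp.2.1, hp.2.2.2, fun k hk => ⟨hk, by simp⟩⟩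
    | cons q t ih =>
      intro p hp hqt
      have hq := hqt q List.mem_cons_self
      obtain ⟨E₀, F₀, hE₀, hF₀, hE₀n, hF₀n, h₀⟩ :=
        furstenberg hg hwm hp.1 hp.2.2.1 hq.1 hq.2.2.1 hp.2.1 hp.2.2.2 hq.2.1 hq.2.2.2
      obtain ⟨E, F, hE, hF, hEn, hFn, h⟩ :=
        ih (E₀, F₀) ⟨hE₀, hE₀n, hF₀, hF₀n⟩ (fun r hr => hqt r (List.mem_cons_of_mem q hr))
      refine ⟨E, F, hE, hF, hEn, hFn, fun k hk => ?_⟩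
      obtain ⟨h1, h2⟩ := h k hk
      obtain ⟨h3, h4⟩ := h₀ k h1
      refine ⟨h3, fun r hr => ?_⟩
      rcases List.mem_cons.1 hr with rfl | hr
      · exact h4
      · exact h2 r hr
  intro l hl
  cases l with
  | nil => exact ⟨1, Nat.one_pos, by simp⟩
  | cons p t =>
    obtain ⟨E, F, hE, hF, hEn, hFn, h⟩ := key t p (hl p List.mem_cons_self)
      (fun q hq => hl q (List.mem_cons_of_mem p hq))
    obtain ⟨k, hk, h1, _⟩ := hwm E E F F hE hE hF hF hEn hEn hFn hFn
    obtain ⟨hp, ht⟩ := h k h1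
    refine ⟨k, hk, fun q hq => ?_⟩
    rcases List.mem_cons.1 hq with rfl | hq
    · exact hp
    · exact ht q hq

lemma trans_preimage_iterate_nonempty (hg : Continuous g) (htr : TransitiveMap g)
    {V : Set Z} (hV : IsOpen V) (hVn : V.Nonempty) : ∀ i : ℕ, (g^[i] ⁻¹' V).Nonempty := by
  intro i
  induction i with
  | zero => simpa using hVn
  | succ i ih =>
    have hW : IsOpen (g^[i] ⁻¹' V) := hV.preimage (hg.iterate i)
    obtain ⟨k, hk, y, ⟨w, hw, rfl⟩, hy⟩ := htr _ _ hW hW ih ih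
    refine ⟨g^[k-1] w, ?_⟩
    have : g^[i+1] (g^[k-1] w) = g^[i] (g^[k] w) := by
      rw [← Function.iterate_add_apply, ← Function.iterate_add_apply]
      congr 1
      omega
    rw [Set.mem_preimage, this]
    exact hy

lemma nat_helper (m k : ℕ) (hm : 0 < m) (hk : 0 < k) :
    ∃ i j : ℕ, i < m ∧ 0 < j ∧ k + i = m * j := by
  obtain ⟨q, r, hqr, hr⟩ : ∃ q r, m * q + r = k ∧ r < m :=
    ⟨k / m, k % m, Nat.div_add_mod k m, Nat.mod_lt k hm⟩
  rcases Nat.eq_zero_or_pos r with rfl | h0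
  · have hq : 0 < q := by
      rcases Nat.eq_zero_or_pos q with rfl | hq
      · simp at hqr; omega
      · exact hq
    exact ⟨0, q, hm, hq, by omega⟩
  · refine ⟨m - r, q + 1, by omega, Nat.succ_pos q, ?_⟩
    have h2 : m * (q + 1) = m * q + m := Nat.mul_succ m q
    omega

lemma wm_totallyTransitive (hg : Continuous g) (hwm : WeaklyMixing g) :
    TotallyTransitive g := by
  intro m hm U V hU hV hUn hVn
  have htr := wm_transitive hwm
  have hpre := trans_preimage_iterate_nonempty hg htr hV hVn
  set l : List (Set Z × Set Z) := (List.range m).map (fun i => (U, g^[i] ⁻¹' V)) with hl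
  obtain ⟨k, hk, hall⟩ := multiWM hg hwm l (by
    intro p hp
    simp only [hl, List.mem_map, List.mem_range] at hp
    obtain ⟨i, _, rfl⟩ := hp
    exact ⟨hU, hUn, hV.preimage (hg.iterate i), hpre i⟩)
  obtain ⟨i, j, him, hj, hij⟩ := nat_helper m k hm hk
  have hmem : (U, g^[i] ⁻¹' V) ∈ l := by
    simp only [hl, List.mem_map, List.mem_range]
    exact ⟨i, him, rfl⟩
  obtain ⟨y, ⟨u, hu, rfl⟩, hy⟩ := hall _ hmem
  refine ⟨j, hj, (g^[m])^[j] u, ⟨u, hu, rfl⟩, ?_⟩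
  have : (g^[m])^[j] u = g^[i] (g^[k] u) := by
    rw [← Function.iterate_mul, ← hij, Nat.add_comm, Function.iterate_add_apply]
  rw [this]
  exact hy

lemma tt_transitive (htt : TotallyTransitive g) : TransitiveMap g := by
  have := htt 1 Nat.one_pos
  rwa [Function.iterate_one] at this

end General

section Factor

variable {Z W : Type*} [TopologicalSpace Z] [TopologicalSpace W]
  {π : Z → W} {g : Z → Z} {h : W → W}

lemma factor_transitive (hπc : Continuous π) (hπs : Function.Surjective π)
    (hsemi : Function.Semiconj π g h) (htr : TransitiveMap g) : TransitiveMap h := by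
  intro U V hU hV hUn hVn
  obtain ⟨u, hu⟩ := hUn
  obtain ⟨v, hv⟩ := hVn
  obtain ⟨zu, rfl⟩ := hπs u
  obtain ⟨zv, rfl⟩ := hπs v
  obtain ⟨k, hk, y, ⟨z, hz, rfl⟩, hy⟩ := htr (π ⁻¹' U) (π ⁻¹' V)
    (hU.preimage hπc) (hV.preimage hπc) ⟨zu, hu⟩ ⟨zv, hv⟩
  refine ⟨k, hk, h^[k] (π z), ⟨π z, hz, rfl⟩, ?_⟩
  rw [← hsemi.iterate_right k z]
  exact hy

lemma factor_wm (hπc : Continuous π) (hπs : Function.Surjective π)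
    (hsemi : Function.Semiconj π g h) (hwm : WeaklyMixing g) : WeaklyMixing h := by
  intro U₁ U₂ V₁ V₂ hU₁ hU₂ hV₁ hV₂ hU₁n hU₂n hV₁n hV₂n
  have hne : ∀ {S : Set W}, S.Nonempty → (π ⁻¹' S).Nonempty := by
    rintro S ⟨s, hs⟩
    obtain ⟨z, rfl⟩ := hπs s
    exact ⟨z, hs⟩
  obtain ⟨k, hk, ⟨y₁, ⟨z₁, hz₁, rfl⟩, hy₁⟩, ⟨y₂, ⟨z₂, hz₂, rfl⟩, hy₂⟩⟩ :=
    hwm (π ⁻¹' U₁) (π ⁻¹' U₂) (π ⁻¹' V₁) (π ⁻¹' V₂)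
      (hU₁.preimage hπc) (hU₂.preimage hπc) (hV₁.preimage hπc) (hV₂.preimage hπc)
      (hne hU₁n) (hne hU₂n) (hne hV₁n) (hne hV₂n)
  refine ⟨k, hk, ⟨h^[k] (π z₁), ⟨π z₁, hz₁, rfl⟩, ?_⟩, ⟨h^[k] (π z₂), ⟨π z₂, hz₂, rfl⟩, ?_⟩⟩
  · rw [← hsemi.iterate_right k z₁]; exact hy₁
  · rw [← hsemi.iterate_right k z₂]; exact hy₂

lemma factor_tt (hπc : Continuous π) (hπs : Function.Surjective π)
    (hsemi : Function.Semiconj π g h) (htt : TotallyTransitive g) : TotallyTransitive h := by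
  intro m hm
  exact factor_transitive hπc hπs (hsemi.iterate_right m) (htt m hm)

end Factor
section FnSpace

variable {X : Type*} [MetricSpace X] {n : ℕ}

lemma Fn.dist_eq (A B : Fn X n) :
    dist A B = hausdorffDist (A.1 : Set X) (B.1 : Set X) := rfl

lemma Fn.edist_ne_top (A B : Fn X n) :
    EMetric.hausdorffEdist (A.1 : Set X) (B.1 : Set X) ≠ ⊤ :=
  hausdorffEdist_ne_top_of_nonempty_of_bounded A.1.nonempty B.1.nonempty
    A.1.isCompact.isBounded B.1.isCompact.isBounded

/-- `{A ∈ Fₙ(X) : A ⊆ U}` is open for `U` open. -/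
lemma isOpen_Fn_subsets {U : Set X} (hU : IsOpen U) :
    IsOpen {A : Fn X n | (A.1 : Set X) ⊆ U} := by
  rw [Metric.isOpen_iff]
  intro A hA
  obtain ⟨δ, hδ, hsub⟩ := A.1.isCompact.exists_thickening_subset_open hU hA
  refine ⟨δ, hδ, fun B hB => ?_⟩
  rw [mem_ball, Fn.dist_eq] at hB
  intro b hb
  obtain ⟨a, ha, hba⟩ := exists_dist_lt_of_hausdorffDist_lt hb hB (Fn.edist_ne_top B A)
  exact hsub (Metric.mem_thickening_iff.2 ⟨a, ha, hba⟩)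

/-- `{A ∈ Fₙ(X) : A ∩ V ≠ ∅}` is open for `V` open. -/
lemma isOpen_Fn_meets {V : Set X} (hV : IsOpen V) :
    IsOpen {A : Fn X n | ((A.1 : Set X) ∩ V).Nonempty} := by
  rw [Metric.isOpen_iff]
  intro A hA
  obtain ⟨a, haA, haV⟩ := hA
  obtain ⟨ε, hε, hball⟩ := Metric.isOpen_iff.1 hV a haV
  refine ⟨ε, hε, fun B hB => ?_⟩
  rw [mem_ball, Fn.dist_eq] at hB
  obtain ⟨b, hbB, hba⟩ := exists_dist_lt_of_hausdorffDist_lt' haA hB (Fn.edist_ne_top B A)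
  exact ⟨b, hbB, hball (by rwa [mem_ball])⟩

/-- Build an element of `Fₙ(X)` from a nonempty finset of cardinality at most `n`. -/
def FnOfFinset (s : Finset X) (hs : s.Nonempty) (hcard : s.card ≤ n) : Fn X n :=
  ⟨⟨⟨(s : Set X), s.finite_toSet.isCompact⟩, by exact_mod_cast hs.to_set⟩,
    s.finite_toSet, by
      show (s : Set X).ncard ≤ n
      rwa [Set.ncard_coe_finset]⟩

@[simp] lemma FnOfFinset_coe (s : Finset X) (hs : s.Nonempty) (hcard : s.card ≤ n) :
    ((FnOfFinset s hs hcard).1 : Set X) = (s : Set X) := rfl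

lemma FnMap_coe (f : X → X) (A : Fn X n) :
    ((FnMap X n f A).1 : Set X) = f '' (A.1 : Set X) := rfl

lemma FnMap_iterate_coe (f : X → X) (k : ℕ) (A : Fn X n) :
    (((FnMap X n f)^[k] A).1 : Set X) = f^[k] '' (A.1 : Set X) := by
  induction k with
  | zero => simp
  | succ k ih =>
    rw [Function.iterate_succ_apply', FnMap_coe, ih, ← Set.image_comp,
      ← Function.iterate_succ']

lemma continuous_FnMap [CompactSpace X] (f : X → X) (hf : Continuous f) :
    Continuous (FnMap X n f) := by
  rw [Metric.continuous_iff]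
  intro A ε hε
  obtain ⟨δ, hδ, hδ2⟩ := Metric.uniformContinuous_iff.1
    (CompactSpace.uniformContinuous_of_continuous hf) (ε / 2) (half_pos hε)
  refine ⟨δ, hδ, fun B hB => ?_⟩
  rw [Fn.dist_eq] at hB ⊢
  have hle : hausdorffDist ((FnMap X n f B).1 : Set X) ((FnMap X n f A).1 : Set X) ≤ ε / 2 := by
    rw [FnMap_coe, FnMap_coe]
    apply hausdorffDist_le_of_mem_dist (half_pos hε).le
    · rintro x ⟨b, hb, rfl⟩
      obtain ⟨a, ha, hba⟩ := exists_dist_lt_of_hausdorffDist_lt hb hB (Fn.edist_ne_top B A)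
      exact ⟨f a, ⟨a, ha, rfl⟩, (hδ2 hba).le⟩
    · rintro x ⟨a, ha, rfl⟩
      obtain ⟨b, hb, hba⟩ := exists_dist_lt_of_hausdorffDist_lt' ha hB (Fn.edist_ne_top B A)
      exact ⟨f b, ⟨b, hb, rfl⟩, (hδ2 (dist_comm a b ▸ hba)).le⟩
  linarith

end FnSpace
section Key

variable {X : Type*} [MetricSpace X] {n : ℕ}

/-- Enumeration of a member of `Fₙ(X)` by `ℕ`, padded by a fixed point. -/
lemma Fn.exists_enum (A : Fn X n) :
    ∃ a : ℕ → X, (∀ i, a i ∈ (A.1 : Set X)) ∧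
      ∃ m, 0 < m ∧ m ≤ n ∧ ∀ x ∈ (A.1 : Set X), ∃ i, i < m ∧ a i = x := by
  obtain ⟨pA, hpA⟩ := A.1.nonempty
  set as : List X := A.2.1.toFinset.toList with has
  have hmem : ∀ y, y ∈ as ↔ y ∈ (A.1 : Set X) := by
    intro y
    rw [has, Finset.mem_toList, Set.Finite.mem_toFinset]
  have hlen : as.length ≤ n := by
    rw [has, Finset.length_toList]
    exact (Set.ncard_eq_toFinset_card _ A.2.1) ▸ A.2.2
  have hpos : 0 < as.length := by
    rcases Nat.eq_zero_or_pos as.length with h | h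
    · rw [List.length_eq_zero_iff] at h
      exact absurd ((hmem pA).2 hpA) (by simp [h])
    · exact h
  refine ⟨fun i => as.getD i pA, ?_, as.length, hpos, hlen, ?_⟩
  · intro i
    show as.getD i pA ∈ (A.1 : Set X)
    rcases Nat.lt_or_ge i as.length with h | h
    · rw [List.getD_eq_getElem as pA h]
      exact (hmem _).1 (List.getElem_mem h)
    · rw [List.getD_eq_default as pA h]
      exact hpA
  · intro x hx
    obtain ⟨j, hj, hjx⟩ := List.mem_iff_getElem.1 ((hmem x).2 hx)
    exact ⟨j, hj, by show as.getD j pA = x; rw [List.getD_eq_getElem as pA hj, hjx]⟩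

lemma key_approx (f : X → X) (A B : Fn X n) {r : ℝ} (hr : 0 < r) :
    ∃ l : List (Set X × Set X),
      (∀ p ∈ l, IsOpen p.1 ∧ p.1.Nonempty ∧ IsOpen p.2 ∧ p.2.Nonempty) ∧
      ∀ k : ℕ, (∀ p ∈ l, (f^[k] '' p.1 ∩ p.2).Nonempty) →
        ∃ C : Fn X n, dist C A ≤ r ∧ dist ((FnMap X n f)^[k] C) B ≤ r := by
  obtain ⟨a, haA, ma, hma0, hman, hsa⟩ := Fn.exists_enum A
  obtain ⟨b, hbB, mb, hmb0, hmbn, hsb⟩ := Fn.exists_enum B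
  set m := max ma mb with hm
  have hm0 : 0 < m := lt_of_lt_of_le hma0 (le_max_left _ _)
  have hmn : m ≤ n := max_le hman hmbn
  refine ⟨(List.range m).map (fun i => (ball (a i) r, ball (b i) r)), ?_, ?_⟩
  · intro p hp
    obtain ⟨i, _, rfl⟩ := List.mem_map.1 hp
    exact ⟨isOpen_ball, ⟨a i, mem_ball_self hr⟩, isOpen_ball, ⟨b i, mem_ball_self hr⟩⟩
  · intro k H
    have H2 : ∀ i : Fin m, ∃ x, x ∈ ball (a i.1) r ∧ f^[k] x ∈ ball (b i.1) r := by
      intro i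
      have hmem : (ball (a i.1) r, ball (b i.1) r) ∈
          (List.range m).map (fun i => (ball (a i) r, ball (b i) r)) :=
        List.mem_map.2 ⟨i.1, List.mem_range.2 i.2, rfl⟩
      obtain ⟨y, ⟨x, hx, rfl⟩, hy⟩ := H _ hmem
      exact ⟨x, hx, hy⟩
    choose x hx1 hx2 using H2
    haveI := Classical.decEq X
    haveI : Nonempty (Fin m) := Fin.pos_iff_nonempty.1 hm0
    set t : Finset X := Finset.image x Finset.univ with ht
    have htn : t.Nonempty := Finset.Nonempty.image Finset.univ_nonempty _
    have htc : t.card ≤ n := le_trans Finset.card_image_le (by simpa using hmn)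
    refine ⟨FnOfFinset t htn htc, ?_, ?_⟩
    · rw [Fn.dist_eq, FnOfFinset_coe]
      apply hausdorffDist_le_of_mem_dist hr.le
      · intro c hc
        obtain ⟨i, _, rfl⟩ := Finset.mem_image.1 (Finset.mem_coe.1 hc)
        exact ⟨a i.1, haA i.1, (mem_ball.1 (hx1 i)).le⟩
      · intro y hy
        obtain ⟨i, him, rfl⟩ := hsa y hy
        have : x ⟨i, lt_of_lt_of_le him (le_max_left _ _)⟩ ∈ (t : Set X) :=
          Finset.mem_coe.2 (Finset.mem_image.2 ⟨_, Finset.mem_univ _, rfl⟩)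
        exact ⟨_, this, by
          rw [dist_comm]
          exact (mem_ball.1 (hx1 ⟨i, lt_of_lt_of_le him (le_max_left _ _)⟩)).le⟩
    · rw [Fn.dist_eq, FnMap_iterate_coe, FnOfFinset_coe]
      apply hausdorffDist_le_of_mem_dist hr.le
      · rintro z ⟨c, hc, rfl⟩
        obtain ⟨i, _, rfl⟩ := Finset.mem_image.1 (Finset.mem_coe.1 hc)
        exact ⟨b i.1, hbB i.1, (mem_ball.1 (hx2 i)).le⟩
      · intro y hy
        obtain ⟨i, him, rfl⟩ := hsb y hy
        set i' : Fin m := ⟨i, lt_of_lt_of_le him (le_max_right _ _)⟩ with hi'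
        refine ⟨f^[k] (x i'), ⟨x i', Finset.mem_coe.2 (Finset.mem_image.2
          ⟨_, Finset.mem_univ _, rfl⟩), rfl⟩, ?_⟩
        rw [dist_comm]
        exact (mem_ball.1 (hx2 i')).le

lemma wm_to_wmFn (f : X → X) (hf : Continuous f) (hwm : WeaklyMixing f) :
    WeaklyMixing (FnMap X n f) := by
  intro 𝒰₁ 𝒰₂ 𝒱₁ 𝒱₂ h𝒰₁ h𝒰₂ h𝒱₁ h𝒱₂ hn₁ hn₂ hn₃ hn₄
  obtain ⟨A₁, hA₁⟩ := hn₁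
  obtain ⟨A₂, hA₂⟩ := hn₂
  obtain ⟨B₁, hB₁⟩ := hn₃
  obtain ⟨B₂, hB₂⟩ := hn₄
  obtain ⟨ε₁, hε₁, hb₁⟩ := Metric.isOpen_iff.1 h𝒰₁ A₁ hA₁
  obtain ⟨ε₂, hε₂, hb₂⟩ := Metric.isOpen_iff.1 h𝒰₂ A₂ hA₂
  obtain ⟨ε₃, hε₃, hb₃⟩ := Metric.isOpen_iff.1 h𝒱₁ B₁ hB₁
  obtain ⟨ε₄, hε₄, hb₄⟩ := Metric.isOpen_iff.1 h𝒱₂ B₂ hB₂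
  set ε := min (min ε₁ ε₂) (min ε₃ ε₄) with hε'
  have hε : 0 < ε := lt_min (lt_min hε₁ hε₂) (lt_min hε₃ hε₄)
  have hr : 0 < ε / 2 := half_pos hε
  obtain ⟨l₁, hl₁, hrec₁⟩ := key_approx f A₁ B₁ hr
  obtain ⟨l₂, hl₂, hrec₂⟩ := key_approx f A₂ B₂ hr
  obtain ⟨k, hk, hall⟩ := multiWM hf hwm (l₁ ++ l₂) (by
    intro p hp
    rcases List.mem_append.1 hp with hp | hp
    · exact hl₁ p hp
    · exact hl₂ p hp)
  obtain ⟨C₁, hC₁, hD₁⟩ := hrec₁ k (fun p hp => hall p (List.mem_append_left _ hp))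
  obtain ⟨C₂, hC₂, hD₂⟩ := hrec₂ k (fun p hp => hall p (List.mem_append_right _ hp))
  have hεle : ε / 2 < ε := half_lt_self hε
  refine ⟨k, hk, ⟨(FnMap X n f)^[k] C₁, ⟨C₁, ?_, rfl⟩, ?_⟩,
    ⟨(FnMap X n f)^[k] C₂, ⟨C₂, ?_, rfl⟩, ?_⟩⟩
  · exact hb₁ (mem_ball.2 (lt_of_le_of_lt hC₁ (lt_of_lt_of_le hεle
      (le_trans (min_le_left _ _) (min_le_left _ _)))))
  · exact hb₃ (mem_ball.2 (lt_of_le_of_lt hD₁ (lt_of_lt_of_le hεle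
      (le_trans (min_le_right _ _) (min_le_left _ _)))))
  · exact hb₂ (mem_ball.2 (lt_of_le_of_lt hC₂ (lt_of_lt_of_le hεle
      (le_trans (min_le_left _ _) (min_le_right _ _)))))
  · exact hb₄ (mem_ball.2 (lt_of_le_of_lt hD₂ (lt_of_lt_of_le hεle
      (le_trans (min_le_right _ _) (min_le_right _ _)))))

end Key
section SFnFacts

variable {X : Type*} [MetricSpace X] {n : ℕ}

lemma SFnQ_continuous : Continuous (SFnQ X n) := continuous_quot_mk

lemma SFnQ_surjective : Function.Surjective (SFnQ X n) := fun χ => Quotient.exists_rep χ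

lemma SFn_semiconj (f : X → X) :
    Function.Semiconj (SFnQ X n) (FnMap X n f) (SFnMap X n f) := fun A => rfl

lemma continuous_SFnMap [CompactSpace X] (f : X → X) (hf : Continuous f) :
    Continuous (SFnMap X n f) := by
  apply continuous_quot_lift
  exact SFnQ_continuous.comp (continuous_FnMap f hf)

/-- The image under `q` of an open set disjoint from `F₁(X)` is open. -/
lemma isOpen_SFnQ_image {𝒰 : Set (Fn X n)} (h𝒰 : IsOpen 𝒰) (hF1 : ∀ A ∈ 𝒰, A ∉ F1 X n) :
    IsOpen (SFnQ X n '' 𝒰) := by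
  have hq : Topology.IsQuotientMap (SFnQ X n) := isQuotientMap_quot_mk
  rw [← hq.isOpen_preimage]
  have : SFnQ X n ⁻¹' (SFnQ X n '' 𝒰) = 𝒰 := by
    ext B
    constructor
    · rintro ⟨A, hA, hq⟩
      have h := Quotient.exact hq
      rcases (h : A = B ∨ (A ∈ F1 X n ∧ B ∈ F1 X n)) with rfl | ⟨h1, _⟩
      · exact hA
      · exact absurd h1 (hF1 A hA)
    · intro hB
      exact ⟨B, hB, rfl⟩
  rw [this]
  exact h𝒰

/-- In a perfect space, any two nonempty open sets contain disjoint nonempty open subsets. -/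
lemma exists_disjoint_opens (hX : Perfect (Set.univ : Set X)) {V₁ V₂ : Set X}
    (h₁ : IsOpen V₁) (h₂ : IsOpen V₂) (hn₁ : V₁.Nonempty) (hn₂ : V₂.Nonempty) :
    ∃ W₁ W₂ : Set X, IsOpen W₁ ∧ IsOpen W₂ ∧ W₁.Nonempty ∧ W₂.Nonempty ∧
      W₁ ⊆ V₁ ∧ W₂ ⊆ V₂ ∧ Disjoint W₁ W₂ := by
  have key : ∃ a b : X, a ∈ V₁ ∧ b ∈ V₂ ∧ a ≠ b := by
    obtain ⟨v₁, hv₁⟩ := hn₁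
    obtain ⟨v₂, hv₂⟩ := hn₂
    by_cases hv : v₁ = v₂
    · subst hv
      have hacc := hX.2 v₁ (Set.mem_univ v₁)
      obtain ⟨y, hy, hyne⟩ := accPt_iff_nhds.1 hacc (V₁ ∩ V₂)
        (((h₁.inter h₂).mem_nhds ⟨hv₁, hv₂⟩))
      exact ⟨v₁, y, hv₁, hy.1.2, fun h => hyne h.symm⟩
    · exact ⟨v₁, v₂, hv₁, hv₂, hv⟩
  obtain ⟨a, b, ha, hb, hab⟩ := key
  have hd : 0 < dist a b / 2 := by
    have := dist_pos.2 hab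
    linarith
  refine ⟨V₁ ∩ ball a (dist a b / 2), V₂ ∩ ball b (dist a b / 2),
    h₁.inter isOpen_ball, h₂.inter isOpen_ball,
    ⟨a, ha, mem_ball_self hd⟩, ⟨b, hb, mem_ball_self hd⟩,
    Set.inter_subset_left, Set.inter_subset_left, ?_⟩
  rw [Set.disjoint_left]
  rintro z ⟨_, hz₁⟩ ⟨_, hz₂⟩
  rw [mem_ball] at hz₁ hz₂
  have := dist_triangle a z b
  rw [dist_comm z a] at hz₁
  linarith

end SFnFacts

section Pimplies

variable {X : Type*} [MetricSpace X] {n : ℕ}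

/-- The auxiliary property `P`: a common hitting time from one open set to two. -/
def PropP (f : X → X) : Prop :=
  ∀ U V₁ V₂ : Set X, IsOpen U → IsOpen V₁ → IsOpen V₂ →
    U.Nonempty → V₁.Nonempty → V₂.Nonempty →
    ∃ k : ℕ, 0 < k ∧ (f^[k] '' U ∩ V₁).Nonempty ∧ (f^[k] '' U ∩ V₂).Nonempty

lemma propP_implies_wm {f : X → X} (hf : Continuous f) (hP : PropP f) : WeaklyMixing f := by
  intro U₁ U₂ V₁ V₂ hU₁ hU₂ hV₁ hV₂ hn₁ hn₂ hn₃ hn₄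
  obtain ⟨a, _, h1, h2⟩ := hP U₂ U₁ V₁ hU₂ hU₁ hV₁ hn₂ hn₁ hn₃
  -- Y = U₂ ∩ f^[-a] U₁ is open and nonempty
  have hY : IsOpen (U₂ ∩ f^[a] ⁻¹' U₁) := hU₂.inter (hU₁.preimage (hf.iterate a))
  have hYn : (U₂ ∩ f^[a] ⁻¹' U₁).Nonempty := by
    obtain ⟨y, ⟨u, hu, rfl⟩, hy⟩ := h1
    exact ⟨u, hu, hy⟩
  have hT : IsOpen (f^[a] ⁻¹' V₁) := hV₁.preimage (hf.iterate a)
  have hTn : (f^[a] ⁻¹' V₁).Nonempty := by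
    obtain ⟨y, ⟨u, hu, rfl⟩, hy⟩ := h2
    exact ⟨u, hy⟩
  obtain ⟨k, hk, g1, g2⟩ := hP (U₂ ∩ f^[a] ⁻¹' U₁) (f^[a] ⁻¹' V₁) V₂ hY hT hV₂ hYn hTn hn₄
  obtain ⟨z, ⟨y₁, hy₁, rfl⟩, hz⟩ := g1
  obtain ⟨w, ⟨y₂, hy₂, rfl⟩, hw⟩ := g2
  refine ⟨k, hk, ⟨f^[k] (f^[a] y₁), ⟨f^[a] y₁, hy₁.2, rfl⟩, ?_⟩,
    ⟨f^[k] y₂, ⟨y₂, hy₂.1, rfl⟩, hw⟩⟩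
  rw [← Function.iterate_add_apply, Nat.add_comm, Function.iterate_add_apply]
  exact hz

lemma transFn_implies_propP (hn : 2 ≤ n) {f : X → X}
    (htr : TransitiveMap (FnMap X n f)) : PropP f := by
  intro U V₁ V₂ hU hV₁ hV₂ ⟨u, hu⟩ ⟨v₁, hv₁⟩ ⟨v₂, hv₂⟩
  classical
  set 𝒰 : Set (Fn X n) := {A | (A.1 : Set X) ⊆ U} with h𝒰'
  set 𝒱 : Set (Fn X n) :=
    {A | ((A.1 : Set X) ∩ V₁).Nonempty} ∩ {A | ((A.1 : Set X) ∩ V₂).Nonempty} with h𝒱'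
  have h𝒰 : IsOpen 𝒰 := isOpen_Fn_subsets hU
  have h𝒱 : IsOpen 𝒱 := (isOpen_Fn_meets hV₁).inter (isOpen_Fn_meets hV₂)
  have h𝒰n : 𝒰.Nonempty := by
    refine ⟨FnOfFinset {u} (Finset.singleton_nonempty u) (by simpa using hn.trans' one_le_two), ?_⟩
    simp only [h𝒰', Set.mem_setOf_eq, FnOfFinset_coe, Finset.coe_singleton,
      Set.singleton_subset_iff]
    exact hu
  have h𝒱n : 𝒱.Nonempty := by
    refine ⟨FnOfFinset {v₁, v₂} ⟨v₁, by simp⟩ (le_trans (Finset.card_insert_le _ _) (by simpa)), ?_⟩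
    constructor
    · exact ⟨v₁, by show v₁ ∈ (({v₁, v₂} : Finset X) : Set X); simp, hv₁⟩
    · exact ⟨v₂, by show v₂ ∈ (({v₁, v₂} : Finset X) : Set X); simp, hv₂⟩
  obtain ⟨k, hk, B, ⟨A, hA, rfl⟩, hB1, hB2⟩ := htr 𝒰 𝒱 h𝒰 h𝒱 h𝒰n h𝒱n
  rw [Set.mem_setOf_eq] at hB1 hB2
  rw [FnMap_iterate_coe] at hB1 hB2
  obtain ⟨w₁, ⟨a₁, ha₁, rfl⟩, hw₁⟩ := hB1
  obtain ⟨w₂, ⟨a₂, ha₂, rfl⟩, hw₂⟩ := hB2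
  exact ⟨k, hk, ⟨f^[k] a₁, ⟨a₁, hA ha₁, rfl⟩, hw₁⟩, ⟨f^[k] a₂, ⟨a₂, hA ha₂, rfl⟩, hw₂⟩⟩

lemma transSFn_implies_propP (hX : Perfect (Set.univ : Set X)) (hn : 2 ≤ n) {f : X → X}
    (htr : TransitiveMap (SFnMap X n f)) : PropP f := by
  intro U V₁ V₂ hU hV₁ hV₂ hUn hVn₁ hVn₂
  classical
  obtain ⟨W₁, W₂, hW₁, hW₂, hWn₁, hWn₂, hWU₁, hWU₂, hWd⟩ :=
    exists_disjoint_opens hX hU hU hUn hUn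
  obtain ⟨V₁', V₂', hV₁', hV₂', hVn₁', hVn₂', hVs₁, hVs₂, hVd⟩ :=
    exists_disjoint_opens hX hV₁ hV₂ hVn₁ hVn₂
  obtain ⟨w₁, hw₁⟩ := hWn₁
  obtain ⟨w₂, hw₂⟩ := hWn₂
  obtain ⟨v₁, hv₁⟩ := hVn₁'
  obtain ⟨v₂, hv₂⟩ := hVn₂'
  set 𝒰 : Set (Fn X n) := {A | (A.1 : Set X) ⊆ U} ∩
    ({A | ((A.1 : Set X) ∩ W₁).Nonempty} ∩ {A | ((A.1 : Set X) ∩ W₂).Nonempty}) with h𝒰'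
  set 𝒱 : Set (Fn X n) :=
    {A | ((A.1 : Set X) ∩ V₁').Nonempty} ∩ {A | ((A.1 : Set X) ∩ V₂').Nonempty} with h𝒱'
  have h𝒰 : IsOpen 𝒰 := (isOpen_Fn_subsets hU).inter
    ((isOpen_Fn_meets hW₁).inter (isOpen_Fn_meets hW₂))
  have h𝒱 : IsOpen 𝒱 := (isOpen_Fn_meets hV₁').inter (isOpen_Fn_meets hV₂')
  -- members of 𝒰, 𝒱 are not singletons
  have hne : ∀ {S T : Set X} (_ : Disjoint S T) (A : Fn X n),
      ((A.1 : Set X) ∩ S).Nonempty → ((A.1 : Set X) ∩ T).Nonempty → A ∉ F1 X n := by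
    rintro S T hd A ⟨p, hpA, hpS⟩ ⟨q, hqA, hqT⟩ ⟨x, hx⟩
    rw [hx] at hpA hqA
    rw [Set.mem_singleton_iff] at hpA hqA
    subst hpA; subst hqA
    exact Set.disjoint_left.1 hd hpS hqT
  have h𝒰F1 : ∀ A ∈ 𝒰, A ∉ F1 X n := fun A hA => hne hWd A hA.2.1 hA.2.2
  have h𝒱F1 : ∀ A ∈ 𝒱, A ∉ F1 X n := fun A hA => hne hVd A hA.1 hA.2
  have h𝒰n : 𝒰.Nonempty := by
    refine ⟨FnOfFinset {w₁, w₂} ⟨w₁, by simp⟩ (le_trans (Finset.card_insert_le _ _) (by simpa)),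
      ?_, ⟨w₁, by show w₁ ∈ (({w₁, w₂} : Finset X) : Set X); simp, hw₁⟩, ⟨w₂, by show w₂ ∈ (({w₁, w₂} : Finset X) : Set X); simp, hw₂⟩⟩
    intro z hz
    change z ∈ (({w₁, w₂} : Finset X) : Set X) at hz
    simp only [FnOfFinset_coe, Finset.coe_insert, Finset.coe_singleton,
      Set.mem_insert_iff, Set.mem_singleton_iff] at hz
    rcases hz with rfl | rfl
    · exact hWU₁ hw₁
    · exact hWU₂ hw₂
  have h𝒱n : 𝒱.Nonempty :=
    ⟨FnOfFinset {v₁, v₂} ⟨v₁, by simp⟩ (le_trans (Finset.card_insert_le _ _) (by simpa)),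
      ⟨v₁, by show v₁ ∈ (({v₁, v₂} : Finset X) : Set X); simp, hv₁⟩, ⟨v₂, by show v₂ ∈ (({v₁, v₂} : Finset X) : Set X); simp, hv₂⟩⟩
  obtain ⟨k, hk, χ, ⟨χ₀, hχ₀, rfl⟩, hχV⟩ := htr (SFnQ X n '' 𝒰) (SFnQ X n '' 𝒱)
    (isOpen_SFnQ_image h𝒰 h𝒰F1) (isOpen_SFnQ_image h𝒱 h𝒱F1)
    (h𝒰n.image _) (h𝒱n.image _)
  obtain ⟨A, hA, rfl⟩ := hχ₀
  rw [← (SFn_semiconj f).iterate_right k A] at hχV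
  obtain ⟨B, hB, hqB⟩ := hχV
  have hBA : B = (FnMap X n f)^[k] A := by
    have h := Quotient.exact hqB
    rcases (h : B = (FnMap X n f)^[k] A ∨ (B ∈ F1 X n ∧ _ ∈ F1 X n)) with h | ⟨h1, _⟩
    · exact h
    · exact absurd h1 (h𝒱F1 B hB)
  rw [hBA] at hB
  obtain ⟨hB1, hB2⟩ := hB
  rw [Set.mem_setOf_eq, FnMap_iterate_coe] at hB1 hB2
  obtain ⟨z₁, ⟨a₁, ha₁, rfl⟩, hz₁⟩ := hB1
  obtain ⟨z₂, ⟨a₂, ha₂, rfl⟩, hz₂⟩ := hB2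
  exact ⟨k, hk, ⟨f^[k] a₁, ⟨a₁, hA.1 ha₁, rfl⟩, hVs₁ hz₁⟩,
    ⟨f^[k] a₂, ⟨a₂, hA.1 ha₂, rfl⟩, hVs₂ hz₂⟩⟩

end Pimplies
theorem stmt9 (X : Type*) [MetricSpace X] [CompactSpace X] [Nontrivial X]
    (hX : Perfect (Set.univ : Set X))
    (n : ℕ) (hn : 2 ≤ n) (f : X → X) (hf : Continuous f) :
    List.TFAE [WeaklyMixing f,
      WeaklyMixing (FnMap X n f),
      WeaklyMixing (SFnMap X n f),
      TotallyTransitive (FnMap X n f),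
      TotallyTransitive (SFnMap X n f),
      TransitiveMap (FnMap X n f),
      TransitiveMap (SFnMap X n f)] := by
  tfae_have 1 → 2 := fun h => wm_to_wmFn f hf h
  tfae_have 2 → 3 := factor_wm SFnQ_continuous SFnQ_surjective (SFn_semiconj f)
  tfae_have 2 → 4 := wm_totallyTransitive (continuous_FnMap f hf)
  tfae_have 3 → 5 := wm_totallyTransitive (continuous_SFnMap f hf)
  tfae_have 4 → 6 := tt_transitive
  tfae_have 5 → 7 := tt_transitive
  tfae_have 6 → 1 := fun h => propP_implies_wm hf (transFn_implies_propP hn h)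
  tfae_have 7 → 1 := fun h => propP_implies_wm hf (transSFn_implies_propP hX hn h)
  tfae_finish
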